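/- Let p be an odd prime and r ≥ 1. The number of residues t ∈ Z/p^rZ such that t² − 4 is a quadratic residue mod p (i.e., (T/p) = 1 where T = t² − 4) equals p^{r−1}(p−3)/2. -/

import Mathlib

open Finset

/-- Counting a periodic predicate over `range (n * m)`. -/
lemma aux_periodic_count (m : ℕ) (Q : ℕ → Prop) [DecidablePred Q] (n : ℕ) :
    ((Finset.range (n * m)).filter fun t => Q (t % m)).card
      = n * ((Finset.range m).filter fun t => Q (t % m)).card := by
  induction n with
  | zero => simp
  | succ n ih =>
    rw [Nat.succ_mul, Finset.range_add, filter_union, card_union_of_disjoint, ih,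
      Finset.filter_map, Finset.card_map]
    · have heq : (Finset.range m).filter ((fun t => Q (t % m)) ∘ ⇑(addLeftEmbedding (n * m)))
          = (Finset.range m).filter (fun t => Q (t % m)) := by
        apply Finset.filter_congr
        intro t _
        show Q ((n * m + t) % m) ↔ Q (t % m)
        rw [Nat.mul_comm, Nat.mul_add_mod]
      rw [heq]
      ring
    · refine Finset.disjoint_left.mpr ?_
      intro a ha hb
      simp only [mem_filter, mem_range, mem_map, addLeftEmbedding_apply] at ha hb
      obtain ⟨⟨b, hb1, rfl⟩, -⟩ := hb
      omega

/-- The main count over `ZMod p`. -/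
lemma aux_key (p : ℕ) [Fact p.Prime] (hp : Odd p) :
    ((Finset.univ.filter fun t : ZMod p =>
        quadraticChar (ZMod p) (t ^ 2 - 4) = 1).card) * 2 = p - 3 := by
  have hp2 : p ≠ 2 := by rintro rfl; exact (Nat.not_odd_iff_even.mpr (by norm_num)) hp
  have hp3 : 3 ≤ p := by
    have := (Fact.out : p.Prime).two_le
    rcases Nat.lt_or_ge p 3 with h | h
    · interval_cases p <;> simp_all
    · exact h
  have hchar : ringChar (ZMod p) ≠ 2 := by
    rw [ZMod.ringChar_zmod_n]; exact hp2
  have h2 : (2 : ZMod p) ≠ 0 := by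
    intro h
    have h' : ((2 : ℕ) : ZMod p) = 0 := by push_cast; exact h
    rw [ZMod.natCast_eq_zero_iff] at h'
    exact hp2 ((Nat.prime_dvd_prime_iff_eq Fact.out Nat.prime_two).mp h')
  have h4 : (4 : ZMod p) ≠ 0 := by
    intro h
    have : (2 : ZMod p) * 2 = 0 := by rw [← h]; norm_num
    rcases mul_eq_zero.mp this with h' | h' <;> exact h2 h'
  -- the set of pairs (t, x) with x² = t² - 4
  set P : Finset (ZMod p × ZMod p) :=
    Finset.univ.filter (fun q => q.2 ^ 2 = q.1 ^ 2 - 4) with hP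
  -- P has cardinality p - 1 via the bijection a ↦ ((a + 4/a)/2, (a - 4/a)/2)
  have hPcard : P.card = p - 1 := by
    have : P.card = (Finset.univ.erase (0 : ZMod p)).card := by
      apply Finset.card_nbij' (fun q => q.1 + q.2)
        (fun a => ((a + 4 / a) / 2, (a - 4 / a) / 2))
      · intro q hq
        simp only [Finset.mem_coe, hP, mem_filter, mem_univ, true_and] at hq
        simp only [Finset.mem_coe, mem_erase, mem_univ, and_true]
        intro h
        have hx : q.2 = -q.1 := by linear_combination h
        rw [hx] at hq
        apply h4
        linear_combination hq
      · intro a ha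
        simp only [Finset.mem_coe, mem_erase, mem_univ, and_true] at ha
        simp only [Finset.mem_coe, hP, mem_filter, mem_univ, true_and]
        field_simp
        ring
      · intro q hq
        simp only [Finset.mem_coe, hP, mem_filter, mem_univ, true_and] at hq
        have hne : q.1 + q.2 ≠ 0 := by
          intro h
          have hx : q.2 = -q.1 := by linear_combination h
          rw [hx] at hq
          apply h4
          linear_combination hq
        have key : 4 / (q.1 + q.2) = q.1 - q.2 := by
          field_simp
          linear_combination hq
        ext
        · show (q.1 + q.2 + 4 / (q.1 + q.2)) / 2 = q.1
          rw [key]; field_simp; ring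
        · show (q.1 + q.2 - 4 / (q.1 + q.2)) / 2 = q.2
          rw [key]; field_simp; ring
      · intro a ha
        simp only [Finset.mem_coe, mem_erase, mem_univ, and_true] at ha
        show (a + 4 / a) / 2 + (a - 4 / a) / 2 = a
        field_simp
        ring
    rw [this, Finset.card_erase_of_mem (mem_univ _), Finset.card_univ, ZMod.card]
  -- the character sum
  set f : ZMod p → ℤ := fun t => quadraticChar (ZMod p) (t ^ 2 - 4) with hf
  have hNat : P.card = ∑ t : ZMod p, (Finset.univ.filter
      fun x : ZMod p => x ^ 2 = t ^ 2 - 4).card := by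
    rw [hP]
    simp only [Finset.card_filter]
    rw [Fintype.sum_prod_type]
  have hsum : ∑ t : ZMod p, (f t + 1) = (P.card : ℤ) := by
    have step : ∀ t : ZMod p, f t + 1
        = ((Finset.univ.filter fun x : ZMod p => x ^ 2 = t ^ 2 - 4).card : ℤ) := by
      intro t
      have hc := quadraticChar_card_sqrts hchar (t ^ 2 - 4)
      rw [hf]
      rw [← hc]
      congr 2
      ext x
      simp [Set.mem_toFinset]
    rw [Finset.sum_congr rfl fun t _ => step t, ← Nat.cast_sum, ← hNat]
  have hS : ∑ t : ZMod p, f t = -1 := by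
    have h1 : ∑ t : ZMod p, (f t + 1) = (∑ t : ZMod p, f t) + p := by
      rw [Finset.sum_add_distrib]
      simp [Finset.card_univ, ZMod.card]
    rw [h1, hPcard] at hsum
    have : ((p - 1 : ℕ) : ℤ) = (p : ℤ) - 1 := by
      have := (Fact.out : p.Prime).two_le
      push_cast [Nat.cast_sub (by omega : 1 ≤ p)]
      ring
    rw [this] at hsum
    linarith
  -- partition according to the value of f
  set A := Finset.univ.filter (fun t : ZMod p => f t = 1) with hA
  set B := Finset.univ.filter (fun t : ZMod p => f t = -1) with hB
  set C := Finset.univ.filter (fun t : ZMod p => f t = 0) with hC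
  have hval : ∀ t : ZMod p, f t = 0 ∨ f t = 1 ∨ f t = -1 := by
    intro t
    by_cases h : t ^ 2 - 4 = 0
    · left; rw [hf]; simp [h]
    · right; exact quadraticChar_dichotomy h
  have hCcard : C.card = 2 := by
    have : C = {2, -2} := by
      ext t
      simp only [hC, mem_filter, mem_univ, true_and, hf, quadraticChar_eq_zero_iff,
        mem_insert, mem_singleton]
      constructor
      · intro h
        have : (t - 2) * (t + 2) = 0 := by linear_combination h
        rcases mul_eq_zero.mp this with h' | h'
        · left; linear_combination h'
        · right; linear_combination h'
      · rintro (rfl | rfl) <;> ring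
    rw [this]
    rw [Finset.card_insert_of_notMem, Finset.card_singleton]
    simp only [mem_singleton]
    intro h
    apply h4
    linear_combination h
  have hABC : A.card + B.card + C.card = p := by
    have e1 : A.card + (Finset.univ.filter (fun t : ZMod p => ¬ f t = 1)).card
        = Fintype.card (ZMod p) := by
      rw [hA, ← Finset.card_univ]
      exact Finset.card_filter_add_card_filter_not _
    have e2 : (Finset.univ.filter (fun t : ZMod p => ¬ f t = 1)).card
        = B.card + C.card := by
      have : Finset.univ.filter (fun t : ZMod p => ¬ f t = 1) = B ∪ C := by
        ext t
        simp only [mem_filter, mem_univ, true_and, Finset.mem_union, hB, hC]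
        rcases hval t with h | h | h <;> simp [h]
      rw [this, Finset.card_union_of_disjoint]
      refine Finset.disjoint_left.mpr ?_
      intro a ha hb
      simp only [hB, hC, mem_filter] at ha hb
      rw [ha.2] at hb
      norm_num at hb
    rw [e2] at e1
    rw [ZMod.card] at e1
    omega
  have hAB : (A.card : ℤ) - B.card = -1 := by
    have : ∑ t : ZMod p, f t = ∑ t ∈ A, f t + (∑ t ∈ B, f t + ∑ t ∈ C, f t) := by
      rw [← Finset.sum_filter_add_sum_filter_not Finset.univ (fun t => f t = 1)]
      congr 1
      have : Finset.univ.filter (fun t : ZMod p => ¬ f t = 1) = B ∪ C := by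
        ext t
        simp only [mem_filter, mem_univ, true_and, Finset.mem_union, hB, hC]
        rcases hval t with h | h | h <;> simp [h]
      rw [this, Finset.sum_union]
      refine Finset.disjoint_left.mpr ?_
      intro a ha hb
      simp only [hB, hC, mem_filter] at ha hb
      rw [ha.2] at hb
      norm_num at hb
    rw [hS] at this
    have sA : ∑ t ∈ A, f t = (A.card : ℤ) := by
      rw [Finset.sum_congr rfl (fun t ht => (Finset.mem_filter.mp ht).2)]
      simp [hA]
    have sB : ∑ t ∈ B, f t = -(B.card : ℤ) := by
      rw [Finset.sum_congr rfl (fun t ht => (Finset.mem_filter.mp ht).2)]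
      simp [hB]
    have sC : ∑ t ∈ C, f t = 0 := by
      rw [Finset.sum_congr rfl (fun t ht => (Finset.mem_filter.mp ht).2)]
      simp
    rw [sA, sB, sC] at this
    linarith
  -- conclude
  have hgoal : (Finset.univ.filter fun t : ZMod p =>
      quadraticChar (ZMod p) (t ^ 2 - 4) = 1).card = A.card := rfl
  rw [hgoal]
  omega

theorem stmt_2 (p : ℕ) [Fact p.Prime] (hp : Odd p) (r : ℕ) (hr : 1 ≤ r) :
    ((Finset.range (p ^ r)).filter
        fun t : ℕ => legendreSym p ((t : ℤ) ^ 2 - 4) = 1).card * 2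
      = p ^ (r - 1) * (p - 3) := by
  have hleg : ∀ t : ℕ, (legendreSym p ((t : ℤ) ^ 2 - 4) = 1)
      ↔ (quadraticChar (ZMod p) (((t % p : ℕ) : ZMod p) ^ 2 - 4) = 1) := by
    intro t
    have h1 : legendreSym p ((t : ℤ) ^ 2 - 4)
        = quadraticChar (ZMod p) (((t : ℤ) ^ 2 - 4 : ℤ) : ZMod p) := rfl
    have h2 : (((t : ℤ) ^ 2 - 4 : ℤ) : ZMod p) = ((t % p : ℕ) : ZMod p) ^ 2 - 4 := by
      rw [ZMod.natCast_mod]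
      push_cast
      ring
    rw [h1, h2]
  have hfilter : (Finset.range (p ^ r)).filter
        (fun t : ℕ => legendreSym p ((t : ℤ) ^ 2 - 4) = 1)
      = (Finset.range (p ^ r)).filter
        (fun t : ℕ => quadraticChar (ZMod p) (((t % p : ℕ) : ZMod p) ^ 2 - 4) = 1) :=
    Finset.filter_congr fun t _ => by rw [hleg t]
  rw [hfilter]
  have hpow : p ^ r = p ^ (r - 1) * p := by
    conv_lhs => rw [← Nat.sub_add_cancel hr]
    rw [pow_succ]
  rw [hpow, aux_periodic_count p
    (fun n : ℕ => quadraticChar (ZMod p) ((n : ZMod p) ^ 2 - 4) = 1)]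
  have hcount : ((Finset.range p).filter
        (fun t : ℕ => quadraticChar (ZMod p) (((t % p : ℕ) : ZMod p) ^ 2 - 4) = 1)).card
      = ((Finset.univ.filter
        (fun z : ZMod p => quadraticChar (ZMod p) (z ^ 2 - 4) = 1)).card) := by
    refine Finset.card_nbij' (fun t : ℕ => ((t : ZMod p))) (fun z : ZMod p => z.val)
      ?_ ?_ ?_ ?_
    · intro t ht
      simp only [Finset.mem_coe, Finset.mem_filter, Finset.mem_range] at ht
      simp only [Finset.mem_coe, Finset.mem_filter, Finset.mem_univ, true_and]
      rw [← ZMod.natCast_mod]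
      exact ht.2
    · intro z hz
      simp only [Finset.mem_coe, Finset.mem_filter, Finset.mem_univ, true_and] at hz
      simp only [Finset.mem_coe, Finset.mem_filter, Finset.mem_range]
      refine ⟨ZMod.val_lt z, ?_⟩
      rw [Nat.mod_eq_of_lt (ZMod.val_lt z), ZMod.natCast_val, ZMod.cast_id]
      exact hz
    · intro t ht
      simp only [Finset.mem_coe, Finset.mem_filter, Finset.mem_range] at ht
      exact ZMod.val_cast_of_lt ht.1
    · intro z _
      exact ZMod.natCast_zmod_val z
  rw [hcount, Nat.mul_assoc]
  congr 1
  exact aux_key p hp
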